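/- Let Ω = [a, b] be a compact interval, σ > 0, π : Ω → ℝ twice continuously differentiable, T > 0, and let μ : [0, T] × Ω → ℝ be continuously differentiable in t and twice continuously differentiable in s (jointly continuously), with μ(t, s) > 0 everywhere, solving the Fokker–Planck equation ∂μ/∂t = ∂/∂s(σ·∂μ/∂s − μ·∂π/∂s) on (0, T) × Ω with no-flux boundary conditions σ·∂μ/∂s(t, a) − μ(t, a)·π'(a) = 0 and σ·∂μ/∂s(t, b) − μ(t, b)·π'(b) = 0 for all t. Define the free energy F(t) = ∫_Ω (−π(s)·μ(t, s) + σ·μ(t, s)·ln(μ(t, s))) ds. Then for every t ∈ (0, T), F is differentiable at t with F'(t) = −∫_Ω μ(t, s)·(∂/∂s(σ·ln μ(t, s) − π(s)))² ds ≤ 0; hence F is non-increasing along the Fokker–Planck dynamics. -/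

import Mathlib

open MeasureTheory Set

/-- H-theorem (free-energy dissipation) for the Fokker–Planck dynamics
`∂μ/∂t = ∂/∂s(σ·∂μ/∂s − μ·∂π/∂s)` on the compact interval `Ω = [a, b]` with no-flux
boundary conditions: along a positive classical solution, the free energy
`F(t) = ∫_Ω (−π·μ + σ·μ·ln μ) ds` is differentiable in `t ∈ (0, T)` with
`F'(t) = −∫_Ω μ·(∂/∂s(σ·ln μ − π))² ds ≤ 0`, hence `F` is non-increasing on `[0, T]`. -/
theorem free_energy_dissipation
    (a b σ T : ℝ) (hab : a < b) (hσ : 0 < σ) (hT : 0 < T)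
    (π dπ dπ2 : ℝ → ℝ)
    (hπ : ∀ s, HasDerivAt π (dπ s) s)
    (hdπ : ∀ s, HasDerivAt dπ (dπ2 s) s)
    (hdπ2cont : Continuous dπ2)
    (μ μt μs μss : ℝ → ℝ → ℝ)
    (hμt : ∀ t s, HasDerivAt (fun t' => μ t' s) (μt t s) t)
    (hμs : ∀ t s, HasDerivAt (fun s' => μ t s') (μs t s) s)
    (hμss : ∀ t s, HasDerivAt (fun s' => μs t s') (μss t s) s)
    (hμcont : Continuous fun p : ℝ × ℝ => μ p.1 p.2)
    (hμtcont : Continuous fun p : ℝ × ℝ => μt p.1 p.2)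
    (hμscont : Continuous fun p : ℝ × ℝ => μs p.1 p.2)
    (hμsscont : Continuous fun p : ℝ × ℝ => μss p.1 p.2)
    (hμpos : ∀ t s, 0 < μ t s)
    (hPDE : ∀ t ∈ Ioo 0 T, ∀ s ∈ Icc a b,
      μt t s = σ * μss t s - (μs t s * dπ s + μ t s * dπ2 s))
    (hbc_a : ∀ t ∈ Ioo 0 T, σ * μs t a - μ t a * dπ a = 0)
    (hbc_b : ∀ t ∈ Ioo 0 T, σ * μs t b - μ t b * dπ b = 0)
    (F : ℝ → ℝ)
    (hF : ∀ t, F t = ∫ s in Icc a b,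
      (-(π s * μ t s) + σ * μ t s * Real.log (μ t s))) :
    (∀ t ∈ Ioo 0 T,
      HasDerivAt F
        (-∫ s in Icc a b, μ t s * (σ * μs t s / μ t s - dπ s) ^ 2) t ∧
      (-∫ s in Icc a b, μ t s * (σ * μs t s / μ t s - dπ s) ^ 2) ≤ 0) ∧
    AntitoneOn F (Icc 0 T) := by
  -- basic continuity facts
  have hπcont : Continuous π := by
    rw [continuous_iff_continuousAt]; exact fun s => (hπ s).continuousAt
  have hdπcont : Continuous dπ := by
    rw [continuous_iff_continuousAt]; exact fun s => (hdπ s).continuousAt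
  have hlogcont : Continuous fun p : ℝ × ℝ => Real.log (μ p.1 p.2) := by
    rw [continuous_iff_continuousAt]
    exact fun p => hμcont.continuousAt.log (hμpos p.1 p.2).ne'
  have hgcont : Continuous fun p : ℝ × ℝ =>
      -(π p.2 * μ p.1 p.2) + σ * μ p.1 p.2 * Real.log (μ p.1 p.2) :=
    (((hπcont.comp continuous_snd).mul hμcont).neg).add
      ((continuous_const.mul hμcont).mul hlogcont)
  have hg'cont : Continuous fun p : ℝ × ℝ =>
      (-π p.2 + σ * Real.log (μ p.1 p.2) + σ) * μt p.1 p.2 :=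
    ((((hπcont.comp continuous_snd).neg).add (continuous_const.mul hlogcont)).add
      continuous_const).mul hμtcont
  -- pointwise time derivative of the integrand
  have hgdiff : ∀ x s, HasDerivAt
      (fun x' => -(π s * μ x' s) + σ * μ x' s * Real.log (μ x' s))
      ((-π s + σ * Real.log (μ x s) + σ) * μt x s) x := by
    intro x s
    have h1 := hμt x s
    have hlog : HasDerivAt (fun x' => Real.log (μ x' s)) (μt x s / μ x s) x :=
      h1.log (hμpos x s).ne'
    have h2 : HasDerivAt (fun x' => -(π s * μ x' s) + σ * μ x' s * Real.log (μ x' s))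
        (-(π s * μt x s) +
          (σ * μt x s * Real.log (μ x s) + σ * μ x s * (μt x s / μ x s))) x :=
      ((h1.const_mul (π s)).neg).add ((h1.const_mul σ).mul hlog)
    convert h2 using 1
    have hne : μ x s ≠ 0 := (hμpos x s).ne'
    field_simp
    ring
  have hFeq : F = fun x => ∫ s in Icc a b,
      (-(π s * μ x s) + σ * μ x s * Real.log (μ x s)) := funext hF
  -- differentiation under the integral sign
  have key : ∀ t ∈ Ioo 0 T, HasDerivAt F
      (∫ s in Icc a b, (-π s + σ * Real.log (μ t s) + σ) * μt t s) t := by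
    intro t _
    have hcomp : IsCompact (Icc (t - 1) (t + 1) ×ˢ Icc a b) :=
      isCompact_Icc.prod isCompact_Icc
    obtain ⟨C, hC⟩ := hcomp.exists_bound_of_continuousOn hg'cont.continuousOn
    have main := hasDerivAt_integral_of_dominated_loc_of_deriv_le
      (μ := volume.restrict (Icc a b))
      (F := fun x s => -(π s * μ x s) + σ * μ x s * Real.log (μ x s))
      (F' := fun x s => (-π s + σ * Real.log (μ x s) + σ) * μt x s)
      (bound := fun _ => C) (x₀ := t) (Metric.ball_mem_nhds t one_pos)
      (Filter.Eventually.of_forall fun x =>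
        ((hgcont.comp (Continuous.prodMk_right x)).aestronglyMeasurable))
      ((hgcont.comp (Continuous.prodMk_right t)).integrableOn_Icc)
      ((hg'cont.comp (Continuous.prodMk_right t)).aestronglyMeasurable)
      ?_ ?_ ?_
    · rw [hFeq]; exact main.2
    · filter_upwards [ae_restrict_mem measurableSet_Icc] with s hs x hx
      have h1 : |x - t| < 1 := by simpa [Real.dist_eq] using hx
      obtain ⟨h2, h3⟩ := abs_lt.mp h1
      exact hC ((x, s)) ⟨⟨by linarith, by linarith⟩, hs⟩
    · exact (integrableOn_const_iff).mpr (Or.inr measure_Icc_lt_top)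
    · exact Filter.Eventually.of_forall fun s x _ => hgdiff x s
  -- the dissipation identity via integration by parts
  have hident : ∀ t ∈ Ioo 0 T,
      (∫ s in Icc a b, (-π s + σ * Real.log (μ t s) + σ) * μt t s)
        = -∫ s in Icc a b, μ t s * (σ * μs t s / μ t s - dπ s) ^ 2 := by
    intro t ht
    have hIcc : ∀ f : ℝ → ℝ, (∫ s in Icc a b, f s) = ∫ s in a..b, f s := fun f => by
      rw [intervalIntegral.integral_of_le hab.le, integral_Icc_eq_integral_Ioc]
    rw [hIcc, hIcc]
    have hμtc : Continuous fun s => μ t s := hμcont.comp (Continuous.prodMk_right t)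
    have hμstc : Continuous fun s => μs t s := hμscont.comp (Continuous.prodMk_right t)
    have hμsstc : Continuous fun s => μss t s := hμsscont.comp (Continuous.prodMk_right t)
    have hu : ∀ s, HasDerivAt (fun s' => σ * Real.log (μ t s') - π s' + σ)
        (σ * μs t s / μ t s - dπ s) s := by
      intro s
      have h1 : HasDerivAt (fun s' => Real.log (μ t s')) (μs t s / μ t s) s :=
        (hμs t s).log (hμpos t s).ne'
      have h2 := ((h1.const_mul σ).sub (hπ s)).add_const σ
      exact h2.congr_deriv (by ring)
    have hv : ∀ s, HasDerivAt (fun s' => σ * μs t s' - μ t s' * dπ s')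
        (σ * μss t s - (μs t s * dπ s + μ t s * dπ2 s)) s := fun s =>
      ((hμss t s).const_mul σ).sub ((hμs t s).mul (hdπ s))
    have hu'int : IntervalIntegrable (fun s => σ * μs t s / μ t s - dπ s) volume a b :=
      (((continuous_const.mul hμstc).div hμtc fun s => (hμpos t s).ne').sub hdπcont).intervalIntegrable a b
    have hv'int : IntervalIntegrable
        (fun s => σ * μss t s - (μs t s * dπ s + μ t s * dπ2 s)) volume a b :=
      ((continuous_const.mul hμsstc).sub ((hμstc.mul hdπcont).add (hμtc.mul hdπ2cont))).intervalIntegrable a b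
    have hIBP := intervalIntegral.integral_mul_deriv_eq_deriv_mul
      (fun s _ => hu s) (fun s _ => hv s) hu'int hv'int
    have hLHS : (∫ s in a..b, (-π s + σ * Real.log (μ t s) + σ) * μt t s)
        = ∫ s in a..b, (σ * Real.log (μ t s) - π s + σ) *
            (σ * μss t s - (μs t s * dπ s + μ t s * dπ2 s)) := by
      apply intervalIntegral.integral_congr
      intro s hs
      rw [uIcc_of_le hab.le] at hs
      dsimp only
      rw [hPDE t ht s hs]; ring
    have hRHS : (∫ s in a..b, (σ * μs t s / μ t s - dπ s) * (σ * μs t s - μ t s * dπ s))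
        = ∫ s in a..b, μ t s * (σ * μs t s / μ t s - dπ s) ^ 2 := by
      apply intervalIntegral.integral_congr
      intro s _
      dsimp only
      have hne : μ t s ≠ 0 := (hμpos t s).ne'
      field_simp
    rw [hLHS, hIBP, hbc_a t ht, hbc_b t ht, hRHS]
    ring
  have hnonneg : ∀ t, 0 ≤ ∫ s in Icc a b, μ t s * (σ * μs t s / μ t s - dπ s) ^ 2 :=
    fun t => setIntegral_nonneg measurableSet_Icc fun s _ =>
      mul_nonneg (hμpos t s).le (sq_nonneg _)
  have hder : ∀ t ∈ Ioo 0 T, HasDerivAt F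
      (-∫ s in Icc a b, μ t s * (σ * μs t s / μ t s - dπ s) ^ 2) t := by
    intro t ht
    have h := key t ht
    rwa [hident t ht] at h
  have hFcont : Continuous F := by
    rw [hFeq]
    exact continuous_parametric_integral_of_continuous
      (f := fun (x s : ℝ) => -(π s * μ x s) + σ * μ x s * Real.log (μ x s))
      hgcont isCompact_Icc
  refine ⟨fun t ht => ⟨hder t ht, neg_nonpos.mpr (hnonneg t)⟩, ?_⟩
  apply antitoneOn_of_deriv_nonpos (convex_Icc 0 T) hFcont.continuousOn
  · intro x hx
    rw [interior_Icc] at hx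
    exact ((hder x hx).differentiableAt).differentiableWithinAt
  · intro x hx
    rw [interior_Icc] at hx
    rw [(hder x hx).deriv]
    exact neg_nonpos.mpr (hnonneg x)
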